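/- Let α be a composition of length n, λ a partition, and k ≥ 0 with λ_1 − k ≤ n. If T is a semistandard Young tableau of shape λ ⊕ Δ_α with lattice reading word such that the first row of λ contains at most k entries equal to 1, then the tableau of shape S(λ,α;k) obtained from T by shifting the foundation λ to the right (keeping all entries) is also a semistandard Young tableau with lattice reading word. -/

import Mathlib

open Finset

namespace SchurStair

/-- A diagram is a finite set of cells `(row, column)`, with row `0` at the top. -/
abbrev Diagram := Finset (ℕ × ℕ)

/-- `T` is a semistandard filling of `D`: positive entries, rows weakly increase
left to right, columns strictly increase top to bottom. -/
def IsSSYT (D : Diagram) (T : ℕ × ℕ → ℕ) : Prop :=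
  (∀ x ∈ D, 1 ≤ T x) ∧
  (∀ i j : ℕ, (i, j) ∈ D → (i, j + 1) ∈ D → T (i, j) ≤ T (i, j + 1)) ∧
  (∀ i j : ℕ, (i, j) ∈ D → (i + 1, j) ∈ D → T (i, j) < T (i + 1, j))

/-- The content of a filling: `content D T v` is the number of cells of `D`
with entry `v`. -/
def content (D : Diagram) (T : ℕ × ℕ → ℕ) : ℕ → ℕ :=
  fun v => (D.filter fun x => T x = v).card

/-- `y` is read at or before `x` in the reading word
(rows right to left, proceeding from the top row to the bottom). -/
def ReadBefore (x y : ℕ × ℕ) : Prop :=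
  y.1 < x.1 ∨ (y.1 = x.1 ∧ x.2 ≤ y.2)

open Classical in
/-- The reading word of `T` on `D` is lattice: in every prefix, the number of
`v+1`'s read is at least the number of `v+2`'s read. -/
def IsLattice (D : Diagram) (T : ℕ × ℕ → ℕ) : Prop :=
  ∀ x ∈ D, ∀ v : ℕ,
    (D.filter fun y => ReadBefore x y ∧ T y = v + 2).card ≤
      (D.filter fun y => ReadBefore x y ∧ T y = v + 1).card

/-- The semistandard Young tableaux of shape `D` and content `c`
(normalized to be `0` off `D`). -/
def SSYTs (D : Diagram) (c : ℕ → ℕ) : Set ((ℕ × ℕ) → ℕ) :=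
  {T | IsSSYT D T ∧ (∀ x ∉ D, T x = 0) ∧ content D T = c}

/-- The SSYT of shape `D` and content `c` whose reading word is lattice. -/
def LatticeSSYTs (D : Diagram) (c : ℕ → ℕ) : Set ((ℕ × ℕ) → ℕ) :=
  {T | T ∈ SSYTs D c ∧ IsLattice D T}

/-- The coefficient of the monomial `x^c` in the skew Schur function `s_D`. -/
noncomputable def ssytCount (D : Diagram) (c : ℕ → ℕ) : ℕ := (SSYTs D c).ncard

/-- By the Littlewood–Richardson rule, the coefficient of the Schur function
`s_c` in the Schur expansion of `s_D`. -/
noncomputable def lrCount (D : Diagram) (c : ℕ → ℕ) : ℕ := (LatticeSSYTs D c).ncard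

/-- `s_{D₁} - s_{D₂}` is Schur-positive (phrased via the LR rule). -/
def SchurPos (D₁ D₂ : Diagram) : Prop := ∀ c : ℕ → ℕ, lrCount D₂ c ≤ lrCount D₁ c

/-- `α` encodes a composition `(α_1, …, α_n)`: the 1-based part `α_i` is `α (i-1)`. -/
def IsComposition (n : ℕ) (α : ℕ → ℕ) : Prop := ∀ i < n, 0 < α i

/-- Height of column `c` (0-based) of the staircase `δ_α`. -/
def stairColHt (n : ℕ) (α : ℕ → ℕ) (c : ℕ) : ℕ := ∑ i ∈ Finset.Ico c n, α i

/-- The number of rows `|α|` of the fat staircases `δ_α`, `Δ_α`. -/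
def stairLen (n : ℕ) (α : ℕ → ℕ) : ℕ := ∑ i ∈ Finset.range n, α i

/-- Row lengths of the staircase partition `δ_α = (n^{α_n}, …, 1^{α_1})`. -/
def deltaPart (n : ℕ) (α : ℕ → ℕ) : ℕ → ℕ :=
  fun r => ((Finset.range n).filter fun c => r < stairColHt n α c).card

/-- The rotated fat staircase `Δ_α`, inside its `|α| × n` bounding box. -/
def deltaUp (n : ℕ) (α : ℕ → ℕ) : Diagram :=
  (Finset.range (stairLen n α) ×ˢ Finset.range n).filter fun x =>
    stairLen n α ≤ x.1 + stairColHt n α (n - 1 - x.2)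

/-- Cells of a partition `lam` (with at most `m` parts), top-left justified. -/
def partCells (m : ℕ) (lam : ℕ → ℕ) : Diagram :=
  (Finset.range m ×ˢ Finset.range (lam 0)).filter fun x => x.2 < lam x.1

/-- Translate a diagram down by `dr` and right by `dc`. -/
def shiftD (D : Diagram) (dr dc : ℕ) : Diagram := D.image fun x => (x.1 + dr, x.2 + dc)

/-- The fat staircase with bad foundation `S(λ, α; k)`: the foundation `lam`
(at most `m` parts) is placed immediately below `Δ_α`, its first row beginning
one box below and `k` boxes left of the bottom-left box of `Δ_α`, so that
the rows overlap in `lam 0 - k` column positions. -/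
def shapeS (n : ℕ) (α : ℕ → ℕ) (m : ℕ) (lam : ℕ → ℕ) (k : ℕ) : Diagram :=
  shiftD (deltaUp n α) 0 k ∪ shiftD (partCells m lam) (stairLen n α) 0

/-- The direct sum `λ ⊕ Δ_α` (disconnected, `λ` to the lower left). -/
def dsumS (n : ℕ) (α : ℕ → ℕ) (m : ℕ) (lam : ℕ → ℕ) : Diagram :=
  shiftD (deltaUp n α) 0 (lam 0) ∪ shiftD (partCells m lam) (stairLen n α) 0

/-- The hook `(a, 1^{l-1})` as a partition. -/
def hookPart (a l : ℕ) : ℕ → ℕ :=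
  fun i => if i = 0 then a else if i < l then 1 else 0

/-- The set `R_{α,k}` of possible first-row foundation entries:
`{1 + α_n + ⋯ + α_{n+1-j} : 1 ≤ j ≤ n}`, together with `1` when `k > 0`. -/
def Rfin (n : ℕ) (α : ℕ → ℕ) (k : ℕ) : Finset ℕ :=
  ((Finset.Icc 1 n).image fun j => 1 + ∑ i ∈ Finset.Ico (n - j) n, α i) ∪
    (if 0 < k then {1} else ∅)

/-- The complement `p^c` of a partition `p` in the rectangle `(b^a)`
(`a` rows of width `b`): the 180° rotation of `(b^a) / p`. -/
def complementPart (a b : ℕ) (p : ℕ → ℕ) : ℕ → ℕ :=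
  fun i => if i < a then b - p (a - 1 - i) else 0

/-- Cells of the skew diagram `p / q`, where `p` has at most `a` parts. -/
def skewCells (a : ℕ) (p q : ℕ → ℕ) : Diagram :=
  (Finset.range a ×ˢ Finset.range (p 0)).filter fun x => q x.1 ≤ x.2 ∧ x.2 < p x.1

/-- Extend a tuple `Fin a → Fin (b+1)` to a function `ℕ → ℕ` (zero beyond `a`);
used to enumerate the partitions contained in the rectangle `(b^a)`. -/
def extFun (a b : ℕ) (f : Fin a → Fin (b + 1)) : ℕ → ℕ :=
  fun i => if h : i < a then (f ⟨i, h⟩ : ℕ) else 0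

/-- The content function of a partition `p`: the entry `v ≥ 1` occurs `p (v-1)` times. -/
def partContent (p : ℕ → ℕ) : ℕ → ℕ := fun v => if v = 0 then 0 else p (v - 1)

open Classical in
/-- The Littlewood–Richardson coefficient `c^ν_{κσ}` (with `ν` a partition of at
most `a` parts): the number of lattice SSYT of shape `ν/κ` and content `σ`. -/
noncomputable def lrCoeff (a : ℕ) (ν κ : ℕ → ℕ) (σ : ℕ → ℕ) : ℕ :=
  if ∀ i, κ i ≤ ν i then lrCount (skewCells a ν κ) σ else 0

open Classical in
/-- The truncated complement, in the rectangle `(b^a)`, of the symmetric function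
with Schur coefficient family `F`: `c(∑_ν F(ν) s_ν) = ∑_{ν ⊆ (b^a)} F(ν) s_{ν^c}`,
expressed as a monomial-coefficient (content-counting) function. -/
noncomputable def truncComplement (a b : ℕ) (F : (ℕ → ℕ) → ℕ) : (ℕ → ℕ) → ℕ :=
  fun c => ∑ ν : Fin a → Fin (b + 1),
    if Antitone (extFun a b ν) then
      F (extFun a b ν) *
        ssytCount (skewCells a (complementPart a b (extFun a b ν)) fun _ => 0) c
    else 0

/-- `D` is a skew diagram: row `i` occupies the columns `g i ≤ j < f i` for
nested partitions `g ⊆ f`. -/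
def IsSkew (D : Diagram) : Prop :=
  ∃ f g : ℕ → ℕ, Antitone f ∧ Antitone g ∧ (∀ i, g i ≤ f i) ∧
    ∀ x : ℕ × ℕ, x ∈ D ↔ g x.1 ≤ x.2 ∧ x.2 < f x.1

/-- One more than the largest row index of `D`. -/
def diagHeight (D : Diagram) : ℕ := D.sup fun x => x.1 + 1

/-- One more than the largest column index of `D`. -/
def diagWidth (D : Diagram) : ℕ := D.sup fun x => x.2 + 1

/-- The direct sum `D₁ ⊕ D₂`: `D₂` placed above and to the right of `D₁`. -/
def directSum (D₁ D₂ : Diagram) : Diagram :=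
  shiftD D₁ (diagHeight D₂) 0 ∪ shiftD D₂ 0 (diagWidth D₁)

/-- The 180° rotation `D°` of a diagram (within its bounding box). -/
def rotateD (D : Diagram) : Diagram :=
  D.image fun x => (diagHeight D - 1 - x.1, diagWidth D - 1 - x.2)

end SchurStair

namespace SchurStair

section Aux

/-- Height of the `c`-th column (from the left) of `Δ_α`. -/
def colH (n : ℕ) (α : ℕ → ℕ) (c : ℕ) : ℕ := stairColHt n α (n - 1 - c)

lemma colH_le (n : ℕ) (α : ℕ → ℕ) (c : ℕ) : colH n α c ≤ stairLen n α := by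
  unfold colH stairColHt stairLen
  rw [Finset.range_eq_Ico]
  exact Finset.sum_le_sum_of_subset (Finset.Ico_subset_Ico (Nat.zero_le _) le_rfl)

lemma colH_mono {n : ℕ} {α : ℕ → ℕ} {c1 c2 : ℕ} (h : c1 ≤ c2) (h2 : c2 < n) :
    colH n α c1 ≤ colH n α c2 := by
  unfold colH stairColHt
  exact Finset.sum_le_sum_of_subset (Finset.Ico_subset_Ico (by omega) le_rfl)

lemma colH_strictMono {n : ℕ} {α : ℕ → ℕ} (hα : IsComposition n α)
    {c1 c2 : ℕ} (h : c1 < c2) (h2 : c2 < n) : colH n α c1 < colH n α c2 := by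
  unfold colH stairColHt
  have hsplit : Finset.Ico (n - 1 - c2) n = Finset.Ico (n - 1 - c2) (n - 1 - c1) ∪ Finset.Ico (n - 1 - c1) n := by
    rw [Finset.Ico_union_Ico_eq_Ico (by omega) (by omega)]
  rw [hsplit, Finset.sum_union (by
    apply Finset.Ico_disjoint_Ico_consecutive)]
  have hpos : 0 < ∑ i ∈ Finset.Ico (n - 1 - c2) (n - 1 - c1), α i := by
    apply Finset.sum_pos'
    · intro i _; exact Nat.zero_le _
    · exact ⟨n - 1 - c2, by simp [Finset.mem_Ico]; omega, hα _ (by omega)⟩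
  omega

lemma mem_shiftD {D : Diagram} {dr dc : ℕ} {x : ℕ × ℕ} :
    x ∈ shiftD D dr dc ↔ dr ≤ x.1 ∧ dc ≤ x.2 ∧ (x.1 - dr, x.2 - dc) ∈ D := by
  unfold shiftD
  simp only [Finset.mem_image]
  constructor
  · rintro ⟨y, hy, rfl⟩
    refine ⟨by omega, by omega, ?_⟩
    simpa using hy
  · rintro ⟨h1, h2, h3⟩
    refine ⟨(x.1 - dr, x.2 - dc), h3, ?_⟩
    simp [Prod.ext_iff]; omega

lemma mem_deltaUp {n : ℕ} {α : ℕ → ℕ} {x : ℕ × ℕ} :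
    x ∈ deltaUp n α ↔ x.1 < stairLen n α ∧ x.2 < n ∧ stairLen n α ≤ x.1 + colH n α x.2 := by
  unfold deltaUp
  simp [Finset.mem_filter, Finset.mem_product, colH, and_assoc]

lemma mem_partCells {m : ℕ} {lam : ℕ → ℕ} (hanti : Antitone lam) {x : ℕ × ℕ} :
    x ∈ partCells m lam ↔ x.1 < m ∧ x.2 < lam x.1 := by
  unfold partCells
  simp only [Finset.mem_filter, Finset.mem_product, Finset.mem_range]
  constructor
  · rintro ⟨⟨h1, _⟩, h3⟩; exact ⟨h1, h3⟩
  · rintro ⟨h1, h2⟩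
    exact ⟨⟨h1, lt_of_lt_of_le h2 (hanti (Nat.zero_le _))⟩, h2⟩

/-- Membership in the `Δ` part of a shifted union, column offset `off`. -/
lemma mem_deltaPart {n : ℕ} {α : ℕ → ℕ} {off : ℕ} {x : ℕ × ℕ} :
    x ∈ shiftD (deltaUp n α) 0 off ↔
      x.1 < stairLen n α ∧ off ≤ x.2 ∧ x.2 - off < n ∧
        stairLen n α ≤ x.1 + colH n α (x.2 - off) := by
  rw [mem_shiftD]
  simp only [Nat.zero_le, true_and, Nat.sub_zero, mem_deltaUp]
  tauto

lemma mem_lamPart {n : ℕ} {α : ℕ → ℕ} {m : ℕ} {lam : ℕ → ℕ} (hanti : Antitone lam) {x : ℕ × ℕ} :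
    x ∈ shiftD (partCells m lam) (stairLen n α) 0 ↔
      stairLen n α ≤ x.1 ∧ x.1 - stairLen n α < m ∧ x.2 < lam (x.1 - stairLen n α) := by
  rw [mem_shiftD, mem_partCells hanti]
  simp only [Nat.zero_le, true_and, Nat.sub_zero]

lemma mem_dsumS {n : ℕ} {α : ℕ → ℕ} {m : ℕ} {lam : ℕ → ℕ} (hanti : Antitone lam) {x : ℕ × ℕ} :
    x ∈ dsumS n α m lam ↔
      (x.1 < stairLen n α ∧ lam 0 ≤ x.2 ∧ x.2 - lam 0 < n ∧
        stairLen n α ≤ x.1 + colH n α (x.2 - lam 0)) ∨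
      (stairLen n α ≤ x.1 ∧ x.1 - stairLen n α < m ∧ x.2 < lam (x.1 - stairLen n α)) := by
  unfold dsumS
  rw [Finset.mem_union, mem_deltaPart, mem_lamPart hanti]

lemma mem_shapeS {n : ℕ} {α : ℕ → ℕ} {m : ℕ} {lam : ℕ → ℕ} {k : ℕ} (hanti : Antitone lam) {x : ℕ × ℕ} :
    x ∈ shapeS n α m lam k ↔
      (x.1 < stairLen n α ∧ k ≤ x.2 ∧ x.2 - k < n ∧
        stairLen n α ≤ x.1 + colH n α (x.2 - k)) ∨
      (stairLen n α ≤ x.1 ∧ x.1 - stairLen n α < m ∧ x.2 < lam (x.1 - stairLen n α)) := by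
  unfold shapeS
  rw [Finset.mem_union, mem_deltaPart, mem_lamPart hanti]

end Aux


section Main

variable {n : ℕ} {α : ℕ → ℕ} {m : ℕ} {lam : ℕ → ℕ} {T : ℕ × ℕ → ℕ}

lemma row_mono {D : Diagram} (hT : IsSSYT D T) {r j1 j2 : ℕ} (h : j1 ≤ j2)
    (hall : ∀ j, j1 ≤ j → j ≤ j2 → (r, j) ∈ D) : T (r, j1) ≤ T (r, j2) := by
  induction j2, h using Nat.le_induction with
  | base => exact le_rfl
  | succ j2 h ih =>
    exact le_trans (ih (fun j hj hj2 => hall j hj (by omega)))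
      (hT.2.1 r j2 (hall j2 h (by omega)) (hall (j2+1) (by omega) le_rfl))

lemma deltaCell_mem (hanti : Antitone lam) {r c : ℕ} (h1 : r < stairLen n α) (h2 : c < n)
    (h3 : stairLen n α ≤ r + colH n α c) : (r, lam 0 + c) ∈ dsumS n α m lam := by
  rw [mem_dsumS hanti]; left
  exact ⟨h1, show lam 0 ≤ lam 0 + c by omega,
    show lam 0 + c - lam 0 < n by omega,
    show stairLen n α ≤ r + colH n α (lam 0 + c - lam 0) by
      rw [Nat.add_sub_cancel_left]; exact h3⟩

lemma lamCell_mem (hanti : Antitone lam) {i j : ℕ} (h1 : i < m) (h2 : j < lam i) :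
    (stairLen n α + i, j) ∈ dsumS n α m lam := by
  rw [mem_dsumS hanti]; right
  exact ⟨show stairLen n α ≤ stairLen n α + i by omega,
    show stairLen n α + i - stairLen n α < m by omega,
    show j < lam (stairLen n α + i - stairLen n α) by
      rw [Nat.add_sub_cancel_left]; exact h2⟩

lemma row_mono_delta (hanti : Antitone lam) (hT : IsSSYT (dsumS n α m lam) T)
    {r c1 c2 : ℕ} (h : c1 ≤ c2) (h2 : c2 < n) (hr : r < stairLen n α)
    (hcell : stairLen n α ≤ r + colH n α c1) :
    T (r, lam 0 + c1) ≤ T (r, lam 0 + c2) := by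
  refine row_mono hT (show lam 0 + c1 ≤ lam 0 + c2 by omega) (fun j hj1 hj2 => ?_)
  have hc' : j - lam 0 < n := by omega
  have hcle : colH n α c1 ≤ colH n α (j - lam 0) := colH_mono (by omega) hc'
  rw [mem_dsumS hanti]; left
  exact ⟨hr, show lam 0 ≤ j by omega, hc',
    show stairLen n α ≤ r + colH n α (j - lam 0) by omega⟩

lemma canonical_lb (hanti : Antitone lam) (hT : IsSSYT (dsumS n α m lam) T) :
    ∀ r c, r < stairLen n α → c < n → stairLen n α ≤ r + colH n α c →
      r + colH n α c - stairLen n α + 1 ≤ T (r, lam 0 + c) := by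
  intro r
  induction r with
  | zero =>
    intro c h1 h2 h3
    have h4 := colH_le n α c
    have he : 0 + colH n α c - stairLen n α + 1 = 1 := by omega
    rw [he]
    exact hT.1 _ (deltaCell_mem hanti h1 h2 h3)
  | succ r ih =>
    intro c h1 h2 h3
    by_cases hup : stairLen n α ≤ r + colH n α c
    · have hlow := ih c (by omega) h2 hup
      have hcol := hT.2.2 r (lam 0 + c) (deltaCell_mem hanti (by omega) h2 hup)
        (deltaCell_mem hanti h1 h2 h3)
      omega
    · have he : r + 1 + colH n α c - stairLen n α + 1 = 1 := by omega
      rw [he]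
      exact hT.1 _ (deltaCell_mem hanti h1 h2 h3)

lemma measure_lt {n r c ry cy : ℕ} (hcy : cy < n) (h : ry < r ∨ (ry = r ∧ c < cy)) :
    ry * (n + 1) + (n - cy) < r * (n + 1) + (n - c) := by
  rcases h with h | ⟨rfl, h⟩
  · calc ry * (n + 1) + (n - cy) < ry * (n + 1) + (n + 1) := by omega
      _ = (ry + 1) * (n + 1) := by ring
      _ ≤ r * (n + 1) := Nat.mul_le_mul_right _ h
      _ ≤ r * (n + 1) + (n - c) := Nat.le_add_right _ _
  · omega

/-- The unique lattice filling of the rotated staircase: the entry of each cell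
is one more than its depth in its column. -/
lemma canonical (hα : IsComposition n α) (hanti : Antitone lam)
    (hT : IsSSYT (dsumS n α m lam) T) (hlat : IsLattice (dsumS n α m lam) T) :
    ∀ r c, r < stairLen n α → c < n → stairLen n α ≤ r + colH n α c →
      T (r, lam 0 + c) = r + colH n α c - stairLen n α + 1 := by
  classical
  suffices H : ∀ N r c, r * (n+1) + (n - c) < N → r < stairLen n α → c < n →
      stairLen n α ≤ r + colH n α c →
      T (r, lam 0 + c) = r + colH n α c - stairLen n α + 1 by
    intro r c h1 h2 h3
    exact H (r * (n+1) + (n - c) + 1) r c (Nat.lt_succ_self _) h1 h2 h3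
  intro N
  induction N with
  | zero => intro r c h; exact absurd h (Nat.not_lt_zero _)
  | succ N ih =>
    intro r c hN h1 h2 h3
    have hNle : r * (n+1) + (n - c) ≤ N := Nat.lt_succ_iff.mp hN
    have hlow := canonical_lb hanti hT r c h1 h2 h3
    by_contra hne
    set v := T (r, lam 0 + c) with hvdef
    have hv : r + colH n α c - stairLen n α + 2 ≤ v := by omega
    have hxmem : (r, lam 0 + c) ∈ dsumS n α m lam := deltaCell_mem hanti h1 h2 h3
    have hlatx := hlat (r, lam 0 + c) hxmem (v - 2)
    have e2 : v - 2 + 2 = v := by omega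
    have e1 : v - 2 + 1 = v - 1 := by omega
    rw [e2, e1] at hlatx
    -- every cell of the `v-1` prefix is a canonical Δ-cell strictly above row r
    have hBprop : ∀ y ∈ (dsumS n α m lam).filter
          (fun y => ReadBefore (r, lam 0 + c) y ∧ T y = v - 1),
        y.1 < r ∧ lam 0 ≤ y.2 ∧ y.2 - lam 0 < n ∧
          y.1 + colH n α (y.2 - lam 0) = stairLen n α + v - 2 := by
      intro y hy
      rw [Finset.mem_filter] at hy
      obtain ⟨hyD, hyR, hyT⟩ := hy
      have hyne : y ≠ (r, lam 0 + c) := by intro h; rw [h] at hyT; omega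
      have hyR' : y.1 < r ∨ (y.1 = r ∧ lam 0 + c ≤ y.2) := hyR
      have hyrow : y.1 ≤ r := by rcases hyR' with h | ⟨h, _⟩ <;> omega
      have hyd : y.1 < stairLen n α ∧ lam 0 ≤ y.2 ∧ y.2 - lam 0 < n ∧
          stairLen n α ≤ y.1 + colH n α (y.2 - lam 0) := by
        rw [mem_dsumS hanti] at hyD
        rcases hyD with h | h
        · exact h
        · exact absurd h1 (by omega)
      obtain ⟨hy1, hy2, hy3, hy4⟩ := hyd
      have horder : y.1 < r ∨ (y.1 = r ∧ c < y.2 - lam 0) := by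
        rcases hyR' with h | ⟨h, h'⟩
        · left; exact h
        · right; refine ⟨h, ?_⟩
          rcases Nat.lt_or_ge c (y.2 - lam 0) with hlt | hge
          · exact hlt
          · exfalso; apply hyne
            exact Prod.ext_iff.mpr ⟨h, show y.2 = lam 0 + c by omega⟩
      have hycan := ih y.1 (y.2 - lam 0)
        (lt_of_lt_of_le (measure_lt hy3 horder) hNle) hy1 hy3 hy4
      have hyeq : (y.1, lam 0 + (y.2 - lam 0)) = y :=
        Prod.ext_iff.mpr ⟨rfl, show lam 0 + (y.2 - lam 0) = y.2 by omega⟩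
      rw [hyeq] at hycan
      have hdepth : y.1 + colH n α (y.2 - lam 0) = stairLen n α + v - 2 := by omega
      rcases horder with h | ⟨hrow, hcol⟩
      · exact ⟨h, hy2, hy3, hdepth⟩
      · exfalso
        have hmono := row_mono_delta hanti hT (le_of_lt hcol) hy3 h1 h3
        have hyeq2 : (r, lam 0 + (y.2 - lam 0)) = y :=
          Prod.ext_iff.mpr ⟨hrow.symm, show lam 0 + (y.2 - lam 0) = y.2 by omega⟩
        rw [hyeq2] at hmono
        omega
    have hxA : (r, lam 0 + c) ∈ (dsumS n α m lam).filter
        (fun y => ReadBefore (r, lam 0 + c) y ∧ T y = v) := by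
      rw [Finset.mem_filter]
      exact ⟨hxmem, Or.inr ⟨rfl, le_rfl⟩, rfl⟩
    have hinj : ∀ y ∈ (dsumS n α m lam).filter
          (fun y => ReadBefore (r, lam 0 + c) y ∧ T y = v - 1),
        (y.1 + 1, y.2) ∈
          ((dsumS n α m lam).filter
            (fun y => ReadBefore (r, lam 0 + c) y ∧ T y = v)).erase (r, lam 0 + c) := by
      intro y hy
      obtain ⟨hy1, hy2, hy3, hy4⟩ := hBprop y hy
      have hcolle := colH_le n α (y.2 - lam 0)
      have hcell : (y.1 + 1, y.2) ∈ dsumS n α m lam := by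
        rw [mem_dsumS hanti]; left
        exact ⟨show y.1 + 1 < stairLen n α by omega, hy2, hy3,
          show stairLen n α ≤ y.1 + 1 + colH n α (y.2 - lam 0) by omega⟩
      have horder : y.1 + 1 < r ∨ (y.1 + 1 = r ∧ c < y.2 - lam 0) := by
        rcases Nat.lt_or_ge (y.1 + 1) r with h | h
        · left; exact h
        · right
          have hr : y.1 + 1 = r := by omega
          refine ⟨hr, ?_⟩
          by_contra hcc
          have hle : y.2 - lam 0 ≤ c := by omega
          have hmle := colH_mono (n := n) (α := α) hle h2
          omega
      have hcan := ih (y.1 + 1) (y.2 - lam 0)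
        (lt_of_lt_of_le (measure_lt hy3 horder) hNle) (by omega) hy3 (by omega)
      have hyeq : (y.1 + 1, lam 0 + (y.2 - lam 0)) = (y.1 + 1, y.2) :=
        Prod.ext_iff.mpr ⟨rfl, show lam 0 + (y.2 - lam 0) = y.2 by omega⟩
      rw [hyeq] at hcan
      have hTval : T (y.1 + 1, y.2) = v := by rw [hcan]; omega
      rw [Finset.mem_erase]
      constructor
      · intro hcontra
        rw [Prod.ext_iff] at hcontra
        have hc1 : y.1 + 1 = r := hcontra.1
        have hc2 : y.2 = lam 0 + c := hcontra.2
        rcases horder with h | ⟨h, h'⟩ <;> omega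
      · rw [Finset.mem_filter]
        refine ⟨hcell, ?_, hTval⟩
        rcases horder with h | ⟨h, h'⟩
        · exact Or.inl h
        · exact Or.inr ⟨h, show lam 0 + c ≤ y.2 by omega⟩
    have hcard : ((dsumS n α m lam).filter
          (fun y => ReadBefore (r, lam 0 + c) y ∧ T y = v - 1)).card ≤
        (((dsumS n α m lam).filter
          (fun y => ReadBefore (r, lam 0 + c) y ∧ T y = v)).erase (r, lam 0 + c)).card := by
      apply Finset.card_le_card_of_injOn (fun y => (y.1 + 1, y.2)) (by intro y hy; exact hinj y hy)
      intro y1 _ y2 _ heq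
      have heq' : (y1.1 + 1, y1.2) = (y2.1 + 1, y2.2) := heq
      rw [Prod.mk.injEq] at heq'
      exact Prod.ext_iff.mpr ⟨by omega, heq'.2⟩
    have hce := Finset.card_erase_of_mem hxA
    have hApos : 0 < ((dsumS n α m lam).filter
        (fun y => ReadBefore (r, lam 0 + c) y ∧ T y = v)).card :=
      Finset.card_pos.mpr ⟨_, hxA⟩
    omega

end Main


section Row

variable {n : ℕ} {α : ℕ → ℕ} {m : ℕ} {lam : ℕ → ℕ} {k : ℕ} {T : ℕ × ℕ → ℕ}

/-- The number of columns of `Δ_α` of height at least `w`. -/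
noncomputable def dcount (n : ℕ) (α : ℕ → ℕ) (w : ℕ) : ℕ :=
  ((Finset.range n).filter fun c => w ≤ colH n α c).card

lemma colH_inj (hα : IsComposition n α) {a b : ℕ} (ha : a < n) (hb : b < n)
    (h : colH n α a = colH n α b) : a = b := by
  rcases Nat.lt_trichotomy a b with hl | he | hl
  · exact absurd h (Nat.ne_of_lt (colH_strictMono hα hl hb))
  · exact he
  · exact absurd h.symm (Nat.ne_of_lt (colH_strictMono hα hl ha))

lemma exists_colH_eq (hw : 2 ≤ w) (h : dcount n α w < dcount n α (w - 1)) :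
    ∃ c < n, colH n α c = w - 1 := by
  by_contra hno
  push_neg at hno
  have : ((Finset.range n).filter fun c => w - 1 ≤ colH n α c) =
      ((Finset.range n).filter fun c => w ≤ colH n α c) := by
    apply Finset.filter_congr
    intro x hx
    rw [Finset.mem_range] at hx
    have := hno x hx
    omega
  unfold dcount at h
  rw [this] at h
  exact lt_irrefl _ h

lemma dcount_pred_le (hα : IsComposition n α) (hw : 2 ≤ w) :
    dcount n α (w - 1) ≤ dcount n α w + 1 := by
  unfold dcount
  have hsub : ((Finset.range n).filter fun c => w - 1 ≤ colH n α c) ⊆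
      ((Finset.range n).filter fun c => w ≤ colH n α c) ∪
        ((Finset.range n).filter fun c => colH n α c = w - 1) := by
    intro c hc
    rw [Finset.mem_filter] at hc
    rw [Finset.mem_union, Finset.mem_filter, Finset.mem_filter]
    rcases Nat.lt_or_ge (colH n α c) w with h | h
    · right; exact ⟨hc.1, by omega⟩
    · left; exact ⟨hc.1, h⟩
  have hone : ((Finset.range n).filter fun c => colH n α c = w - 1).card ≤ 1 := by
    rw [Finset.card_le_one]
    intro a ha b hb
    rw [Finset.mem_filter, Finset.mem_range] at ha hb
    exact colH_inj hα ha.1 hb.1 (by omega)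
  calc ((Finset.range n).filter fun c => w - 1 ≤ colH n α c).card
      ≤ _ := Finset.card_le_card hsub
    _ ≤ _ + _ := Finset.card_union_le _ _
    _ ≤ _ + 1 := by omega

open Classical in
/-- Decomposition of the count of `w`'s in the reading-word prefix ending at the
foundation first-row cell `(stairLen n α, j)`. -/
lemma prefix_card (hα : IsComposition n α) (hanti : Antitone lam)
    (hT : IsSSYT (dsumS n α m lam) T) (hlat : IsLattice (dsumS n α m lam) T)
    (hm0 : 0 < m) {j w : ℕ} (hj : j < lam 0) (hw : 1 ≤ w) :
    ((dsumS n α m lam).filter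
        (fun y => ReadBefore (stairLen n α, j) y ∧ T y = w)).card =
      dcount n α w +
        ((Finset.Ico j (lam 0)).filter fun j' => T (stairLen n α, j') = w).card := by
  classical
  set S := (dsumS n α m lam).filter
      (fun y => ReadBefore (stairLen n α, j) y ∧ T y = w) with hS
  have hsplit := Finset.card_filter_add_card_filter_not
    (s := S) (p := fun y => y.1 < stairLen n α)
  -- the Δ part
  have hd : (S.filter fun y => y.1 < stairLen n α).card = dcount n α w := by
    unfold dcount
    apply Finset.card_bij' (i := fun y _ => y.2 - lam 0)
      (j := fun c _ => (stairLen n α + w - 1 - colH n α c, lam 0 + c))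
    case hi =>
      intro y hy
      rw [Finset.mem_filter, hS, Finset.mem_filter] at hy
      obtain ⟨⟨hyD, _, hyT⟩, hy1⟩ := hy
      rw [mem_dsumS hanti] at hyD
      rcases hyD with hD | hD
      · obtain ⟨h1, h2, h3, h4⟩ := hD
        rw [Finset.mem_filter, Finset.mem_range]
        refine ⟨h3, ?_⟩
        have hcan := canonical hα hanti hT hlat y.1 (y.2 - lam 0) h1 h3 h4
        have hyeq : (y.1, lam 0 + (y.2 - lam 0)) = y :=
          Prod.ext_iff.mpr ⟨rfl, show lam 0 + (y.2 - lam 0) = y.2 by omega⟩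
        rw [hyeq] at hcan
        omega
      · omega
    case hj =>
      intro c hc
      rw [Finset.mem_filter, Finset.mem_range] at hc
      obtain ⟨hcn, hcw⟩ := hc
      have hcl := colH_le n α c
      have h1 : stairLen n α + w - 1 - colH n α c < stairLen n α := by omega
      have h4 : stairLen n α ≤ (stairLen n α + w - 1 - colH n α c) + colH n α c := by omega
      rw [Finset.mem_filter, hS, Finset.mem_filter]
      refine ⟨⟨deltaCell_mem hanti h1 hcn h4, Or.inl h1, ?_⟩, h1⟩
      have hcan := canonical hα hanti hT hlat _ c h1 hcn h4
      rw [hcan]; omega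
    case left_inv =>
      intro y hy
      rw [Finset.mem_filter, hS, Finset.mem_filter] at hy
      obtain ⟨⟨hyD, _, hyT⟩, hy1⟩ := hy
      rw [mem_dsumS hanti] at hyD
      rcases hyD with hD | hD
      · obtain ⟨h1, h2, h3, h4⟩ := hD
        have hcan := canonical hα hanti hT hlat y.1 (y.2 - lam 0) h1 h3 h4
        have hyeq : (y.1, lam 0 + (y.2 - lam 0)) = y :=
          Prod.ext_iff.mpr ⟨rfl, show lam 0 + (y.2 - lam 0) = y.2 by omega⟩
        rw [hyeq] at hcan
        exact Prod.ext_iff.mpr ⟨show stairLen n α + w - 1 - colH n α (y.2 - lam 0) = y.1 by omega,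
          show lam 0 + (y.2 - lam 0) = y.2 by omega⟩
      · omega
    case right_inv =>
      intro c hc
      exact (show lam 0 + c - lam 0 = c by omega)
  -- the foundation-row part
  have hl : (S.filter fun y => ¬ y.1 < stairLen n α).card =
      ((Finset.Ico j (lam 0)).filter fun j' => T (stairLen n α, j') = w).card := by
    apply Finset.card_bij' (i := fun y _ => y.2)
      (j := fun j' _ => (stairLen n α, j'))
    case hi =>
      intro y hy
      rw [Finset.mem_filter, hS, Finset.mem_filter] at hy
      obtain ⟨⟨hyD, hyR, hyT⟩, hy1⟩ := hy
      have hyR' : y.1 < stairLen n α ∨ (y.1 = stairLen n α ∧ j ≤ y.2) := hyR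
      have hrow : y.1 = stairLen n α ∧ j ≤ y.2 := by tauto
      rw [mem_dsumS hanti] at hyD
      rcases hyD with hD | hD
      · omega
      · obtain ⟨h1, h2, h3⟩ := hD
        rw [Finset.mem_filter, Finset.mem_Ico]
        have hy2 : y.2 < lam 0 := by
          have : y.1 - stairLen n α = 0 := by omega
          rwa [this] at h3
        refine ⟨⟨hrow.2, hy2⟩, ?_⟩
        have : (stairLen n α, y.2) = y := Prod.ext_iff.mpr ⟨hrow.1.symm, rfl⟩
        rw [this]; exact hyT
    case hj =>
      intro j' hj'
      rw [Finset.mem_filter, Finset.mem_Ico] at hj'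
      obtain ⟨⟨hj1, hj2⟩, hjT⟩ := hj'
      rw [Finset.mem_filter, hS, Finset.mem_filter]
      have hmem : (stairLen n α, j') ∈ dsumS n α m lam := by
        have := lamCell_mem (n := n) (α := α) hanti hm0 (show j' < lam 0 from hj2)
        simpa using this
      exact ⟨⟨hmem, Or.inr ⟨rfl, hj1⟩, hjT⟩,
        (show ¬ stairLen n α < stairLen n α by omega)⟩
    case left_inv =>
      intro y hy
      rw [Finset.mem_filter, hS, Finset.mem_filter] at hy
      obtain ⟨⟨hyD, hyR, hyT⟩, hy1⟩ := hy
      have hyR' : y.1 < stairLen n α ∨ (y.1 = stairLen n α ∧ j ≤ y.2) := hyR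
      have hrow : y.1 = stairLen n α := by tauto
      exact Prod.ext_iff.mpr ⟨hrow.symm, rfl⟩
    case right_inv =>
      intro j' _
      rfl
  omega

lemma lamRow_mono (hanti : Antitone lam) (hT : IsSSYT (dsumS n α m lam) T)
    (hm0 : 0 < m) {j1 j2 : ℕ} (h : j1 ≤ j2) (h2 : j2 < lam 0) :
    T (stairLen n α, j1) ≤ T (stairLen n α, j2) := by
  refine row_mono hT h (fun j hj1 hj2 => ?_)
  have := lamCell_mem (n := n) (α := α) (i := 0) hanti hm0
    (show j < lam 0 by omega)
  simpa using this

lemma lamRow_ge_two (hanti : Antitone lam) (hT : IsSSYT (dsumS n α m lam) T)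
    (hm0 : 0 < m)
    (hones : ((Finset.range (lam 0)).filter fun j => T (stairLen n α, j) = 1).card ≤ k)
    {j : ℕ} (hj1 : k ≤ j) (hj2 : j < lam 0) : 2 ≤ T (stairLen n α, j) := by
  classical
  by_contra hc
  have hmem : (stairLen n α, j) ∈ dsumS n α m lam := by
    have := lamCell_mem (n := n) (α := α) (i := 0) hanti hm0 hj2
    simpa using this
  have h1 : T (stairLen n α, j) = 1 := by
    have := hT.1 _ hmem
    omega
  have hall : ∀ j', j' ≤ j → T (stairLen n α, j') = 1 := by
    intro j' hj'
    have hmem' : (stairLen n α, j') ∈ dsumS n α m lam := by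
      have := lamCell_mem (n := n) (α := α) (i := 0) hanti hm0 (show j' < lam 0 by omega)
      simpa using this
    have hle := lamRow_mono hanti hT hm0 hj' hj2
    have := hT.1 _ hmem'
    omega
  have hsub : Finset.range (j + 1) ⊆
      (Finset.range (lam 0)).filter fun j' => T (stairLen n α, j') = 1 := by
    intro j' hj'
    rw [Finset.mem_range] at hj'
    rw [Finset.mem_filter, Finset.mem_range]
    exact ⟨by omega, hall j' (by omega)⟩
  have := Finset.card_le_card hsub
  rw [Finset.card_range] at this
  omega

lemma lam_lattice (hα : IsComposition n α) (hanti : Antitone lam)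
    (hT : IsSSYT (dsumS n α m lam) T) (hlat : IsLattice (dsumS n α m lam) T)
    (hm0 : 0 < m) {j : ℕ} (hj : j < lam 0) (he : 2 ≤ T (stairLen n α, j)) :
    dcount n α (T (stairLen n α, j)) +
      ((Finset.Ico j (lam 0)).filter fun j' =>
        T (stairLen n α, j') = T (stairLen n α, j)).card ≤
      dcount n α (T (stairLen n α, j) - 1) := by
  classical
  set e := T (stairLen n α, j) with hedef
  have hmem : (stairLen n α, j) ∈ dsumS n α m lam := by
    have := lamCell_mem (n := n) (α := α) (i := 0) hanti hm0 hj
    simpa using this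
  have hlatx := hlat (stairLen n α, j) hmem (e - 2)
  have e2 : e - 2 + 2 = e := by omega
  have e1 : e - 2 + 1 = e - 1 := by omega
  rw [e2, e1] at hlatx
  rw [prefix_card hα hanti hT hlat hm0 hj (by omega),
    prefix_card hα hanti hT hlat hm0 hj (by omega)] at hlatx
  have hzero : ((Finset.Ico j (lam 0)).filter fun j' =>
      T (stairLen n α, j') = e - 1).card = 0 := by
    rw [Finset.card_eq_zero, Finset.filter_eq_empty_iff]
    intro j' hj'
    rw [Finset.mem_Ico] at hj'
    have := lamRow_mono hanti hT hm0 hj'.1 hj'.2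
    omega
  omega

lemma lamRow_exists (hα : IsComposition n α) (hanti : Antitone lam)
    (hT : IsSSYT (dsumS n α m lam) T) (hlat : IsLattice (dsumS n α m lam) T)
    (hm0 : 0 < m)
    (hones : ((Finset.range (lam 0)).filter fun j => T (stairLen n α, j) = 1).card ≤ k)
    {j : ℕ} (hj1 : k ≤ j) (hj : j < lam 0) :
    ∃ c < n, colH n α c = T (stairLen n α, j) - 1 := by
  classical
  have he := lamRow_ge_two hanti hT hm0 hones hj1 hj
  have hkey := lam_lattice hα hanti hT hlat hm0 hj he
  have hpos : 0 < ((Finset.Ico j (lam 0)).filter fun j' =>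
      T (stairLen n α, j') = T (stairLen n α, j)).card := by
    rw [Finset.card_pos]
    exact ⟨j, by rw [Finset.mem_filter, Finset.mem_Ico]; exact ⟨⟨le_rfl, hj⟩, rfl⟩⟩
  exact exists_colH_eq he (by omega)

lemma lamRow_strict (hα : IsComposition n α) (hanti : Antitone lam)
    (hT : IsSSYT (dsumS n α m lam) T) (hlat : IsLattice (dsumS n α m lam) T)
    (hm0 : 0 < m)
    (hones : ((Finset.range (lam 0)).filter fun j => T (stairLen n α, j) = 1).card ≤ k)
    {j : ℕ} (hj1 : k ≤ j) (hj : j + 1 < lam 0) :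
    T (stairLen n α, j) < T (stairLen n α, j + 1) := by
  classical
  have hle := lamRow_mono hanti hT hm0 (show j ≤ j + 1 by omega) hj
  rcases Nat.lt_or_ge (T (stairLen n α, j)) (T (stairLen n α, j + 1)) with h | h
  · exact h
  have heq : T (stairLen n α, j + 1) = T (stairLen n α, j) := by omega
  exfalso
  have he := lamRow_ge_two hanti hT hm0 hones hj1 (by omega)
  have hkey := lam_lattice hα hanti hT hlat hm0 (show j < lam 0 by omega) he
  have htwo : 2 ≤ ((Finset.Ico j (lam 0)).filter fun j' =>
      T (stairLen n α, j') = T (stairLen n α, j)).card := by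
    have hsub : ({j, j + 1} : Finset ℕ) ⊆ (Finset.Ico j (lam 0)).filter fun j' =>
        T (stairLen n α, j') = T (stairLen n α, j) := by
      intro a ha
      rw [Finset.mem_insert, Finset.mem_singleton] at ha
      rw [Finset.mem_filter, Finset.mem_Ico]
      rcases ha with rfl | rfl
      · exact ⟨⟨le_rfl, by omega⟩, rfl⟩
      · exact ⟨⟨by omega, hj⟩, heq⟩
    have := Finset.card_le_card hsub
    rwa [Finset.card_insert_of_notMem (by simp), Finset.card_singleton] at this
  have hpred := dcount_pred_le (n := n) (α := α) hα he
  omega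

lemma lamRow_main (hα : IsComposition n α) (hanti : Antitone lam)
    (hT : IsSSYT (dsumS n α m lam) T) (hlat : IsLattice (dsumS n α m lam) T)
    (hm0 : 0 < m) (hk : lam 0 ≤ n + k)
    (hones : ((Finset.range (lam 0)).filter fun j => T (stairLen n α, j) = 1).card ≤ k) :
    ∀ d, d + k < lam 0 → colH n α d < T (stairLen n α, d + k) := by
  intro d
  induction d with
  | zero =>
    intro hd
    obtain ⟨c', hc'n, hcol⟩ := lamRow_exists hα hanti hT hlat hm0 hones
      (j := k) (by omega) (by omega)
    have he := lamRow_ge_two hanti hT hm0 hones (j := k) le_rfl (by omega)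
    have hmono := colH_mono (n := n) (α := α) (Nat.zero_le c') hc'n
    have : T (stairLen n α, 0 + k) = T (stairLen n α, k) := by norm_num
    omega
  | succ d ih =>
    intro hd
    have hdn : d + 1 < n := by omega
    have hih := ih (by omega)
    have hstrict := lamRow_strict hα hanti hT hlat hm0 hones
      (j := d + k) (by omega) (show d + k + 1 < lam 0 by omega)
    obtain ⟨c', hc'n, hcol⟩ := lamRow_exists hα hanti hT hlat hm0 hones
      (j := d + 1 + k) (by omega) (by omega)
    have he := lamRow_ge_two hanti hT hm0 hones (j := d + 1 + k) (by omega) (by omega)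
    have heq : T (stairLen n α, d + k + 1) = T (stairLen n α, d + 1 + k) := by
      congr 1
      exact Prod.ext_iff.mpr ⟨rfl, by omega⟩
    have hgt : colH n α d < colH n α c' := by omega
    have hdc : d + 1 ≤ c' := by
      by_contra hcc
      have : c' ≤ d := by omega
      have := colH_mono (n := n) (α := α) this (by omega)
      omega
    have := colH_mono (n := n) (α := α) hdc hc'n
    omega

end Row


/-- A lattice SSYT of shape `λ ⊕ Δ_α` with at most `k` ones in the
first row of `λ` yields, by shifting the foundation to the right, a lattice SSYT
of shape `S(λ,α;k)`. -/
theorem shift_foundation (n : ℕ) (α : ℕ → ℕ) (hα : IsComposition n α)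
    (m : ℕ) (lam : ℕ → ℕ) (hanti : Antitone lam) (hm : ∀ i, m ≤ i → lam i = 0)
    (k : ℕ) (hk : lam 0 ≤ n + k)
    (T : (ℕ × ℕ) → ℕ)
    (hT : IsSSYT (dsumS n α m lam) T) (hT0 : ∀ x ∉ dsumS n α m lam, T x = 0)
    (hlat : IsLattice (dsumS n α m lam) T)
    (hones : ((Finset.range (lam 0)).filter fun j => T (stairLen n α, j) = 1).card ≤ k) :
    IsSSYT (shapeS n α m lam k)
        (fun x => if x ∈ shiftD (deltaUp n α) 0 k then T (x.1, x.2 - k + lam 0)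
          else if x ∈ shiftD (partCells m lam) (stairLen n α) 0 then T x else 0) ∧
      IsLattice (shapeS n α m lam k)
        (fun x => if x ∈ shiftD (deltaUp n α) 0 k then T (x.1, x.2 - k + lam 0)
          else if x ∈ shiftD (partCells m lam) (stairLen n α) 0 then T x else 0) := by
  classical
  set F : (ℕ × ℕ) → ℕ :=
    (fun x => if x ∈ shiftD (deltaUp n α) 0 k then T (x.1, x.2 - k + lam 0)
      else if x ∈ shiftD (partCells m lam) (stairLen n α) 0 then T x else 0) with hF
  -- evaluation lemmas
  have hF_delta : ∀ x ∈ shiftD (deltaUp n α) 0 k, F x = T (x.1, x.2 - k + lam 0) := by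
    intro x hx
    rw [hF]
    exact if_pos hx
  have hF_lam : ∀ x ∈ shiftD (partCells m lam) (stairLen n α) 0, F x = T x := by
    intro x hx
    have hxr : stairLen n α ≤ x.1 := ((mem_lamPart hanti).mp hx).1
    have hnd : x ∉ shiftD (deltaUp n α) 0 k := by
      intro hc
      have := (mem_deltaPart.mp hc).1
      omega
    show (if x ∈ shiftD (deltaUp n α) 0 k then T (x.1, x.2 - k + lam 0)
      else if x ∈ shiftD (partCells m lam) (stairLen n α) 0 then T x else 0) = T x
    rw [if_neg hnd, if_pos hx]
  -- membership transfers
  have hdsum_of_delta : ∀ x : ℕ × ℕ, x ∈ shiftD (deltaUp n α) 0 k →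
      (x.1, x.2 - k + lam 0) ∈ dsumS n α m lam := by
    intro x hx
    rw [mem_deltaPart] at hx
    obtain ⟨h1, h2, h3, h4⟩ := hx
    rw [mem_dsumS hanti]; left
    refine ⟨h1, show lam 0 ≤ x.2 - k + lam 0 by omega,
      show x.2 - k + lam 0 - lam 0 < n by omega, ?_⟩
    show stairLen n α ≤ x.1 + colH n α (x.2 - k + lam 0 - lam 0)
    rw [show x.2 - k + lam 0 - lam 0 = x.2 - k by omega]
    exact h4
  have hdsum_of_lam : ∀ x : ℕ × ℕ, x ∈ shiftD (partCells m lam) (stairLen n α) 0 →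
      x ∈ dsumS n α m lam := by
    intro x hx
    exact Finset.mem_union_right _ hx
  have hshape_union : ∀ x : ℕ × ℕ, x ∈ shapeS n α m lam k →
      x ∈ shiftD (deltaUp n α) 0 k ∨ x ∈ shiftD (partCells m lam) (stairLen n α) 0 := by
    intro x hx
    exact Finset.mem_union.mp hx
  -- the junction inequality
  have hjunction : ∀ i j : ℕ, (i, j) ∈ shiftD (deltaUp n α) 0 k →
      (i + 1, j) ∈ shiftD (partCells m lam) (stairLen n α) 0 →
      F (i, j) < F (i + 1, j) := by
    intro i j h1 h2
    obtain ⟨hd1'', hd2'', hd3'', hd4''⟩ := mem_deltaPart.mp h1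
    have hd1 : i < stairLen n α := hd1''
    have hd2 : k ≤ j := hd2''
    have hd3 : j - k < n := hd3''
    have hd4 : stairLen n α ≤ i + colH n α (j - k) := hd4''
    have hl := (mem_lamPart hanti).mp h2
    obtain ⟨hl1, hl2, hl3⟩ := hl
    have hiL : i + 1 = stairLen n α := by omega
    have e0 : (i + 1, j).1 - stairLen n α = 0 := by
      show i + 1 - stairLen n α = 0; omega
    rw [e0] at hl3
    have hm0 : 0 < m := by
      rw [e0] at hl2; omega
    have hjl : j < lam 0 := hl3
    have hFij : F (i, j) = T (i, j - k + lam 0) := hF_delta _ h1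
    have hcan := canonical hα hanti hT hlat i (j - k) hd1 hd3 (by
      show stairLen n α ≤ i + colH n α (j - k); exact hd4)
    have hpair : (i, lam 0 + (j - k)) = (i, j - k + lam 0) :=
      Prod.ext_iff.mpr ⟨rfl, by omega⟩
    rw [hpair] at hcan
    have hFl : F (i + 1, j) = T (i + 1, j) := hF_lam _ h2
    have hjun := lamRow_main hα hanti hT hlat hm0 hk hones (j - k) (by omega)
    rw [show j - k + k = j by omega] at hjun
    rw [← hiL] at hjun
    rw [hFij, hFl, hcan]
    omega
  constructor
  · refine ⟨?_, ?_, ?_⟩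
    · -- positivity
      intro x hx
      rcases hshape_union x hx with h | h
      · rw [hF_delta x h]
        exact hT.1 _ (hdsum_of_delta x h)
      · rw [hF_lam x h]
        exact hT.1 _ (hdsum_of_lam x h)
    · -- rows
      intro i j h1 h2
      rcases hshape_union _ h1 with hx | hx
      · have hiL : i < stairLen n α := (mem_deltaPart.mp hx).1
        have hx2 : (i, j + 1) ∈ shiftD (deltaUp n α) 0 k := by
          rcases hshape_union _ h2 with h | h
          · exact h
          · have := ((mem_lamPart hanti).mp h).1
            exact absurd this (by omega)
        have hkj : k ≤ j := (mem_deltaPart.mp hx).2.1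
        rw [hF_delta _ hx, hF_delta _ hx2]
        have hmem1 := hdsum_of_delta _ hx
        have hmem2 := hdsum_of_delta _ hx2
        have e : (j + 1) - k + lam 0 = (j - k + lam 0) + 1 := by omega
        have := hT.2.1 i (j - k + lam 0) hmem1 (by
          show (i, j - k + lam 0 + 1) ∈ dsumS n α m lam
          rw [← e]; exact hmem2)
        show T (i, j - k + lam 0) ≤ T (i, (j + 1) - k + lam 0)
        rw [e]
        exact this
      · have hiL : stairLen n α ≤ i := ((mem_lamPart hanti).mp hx).1
        have hx2 : (i, j + 1) ∈ shiftD (partCells m lam) (stairLen n α) 0 := by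
          rcases hshape_union _ h2 with h | h
          · have := (mem_deltaPart.mp h).1
            exact absurd this (by omega)
          · exact h
        rw [hF_lam _ hx, hF_lam _ hx2]
        exact hT.2.1 i j (hdsum_of_lam _ hx) (hdsum_of_lam _ hx2)
    · -- columns
      intro i j h1 h2
      rcases hshape_union _ h2 with hx2 | hx2
      · -- lower cell in Δ
        have hiL : i + 1 < stairLen n α := (mem_deltaPart.mp hx2).1
        have hx1 : (i, j) ∈ shiftD (deltaUp n α) 0 k := by
          rcases hshape_union _ h1 with h | h
          · exact h
          · have := ((mem_lamPart hanti).mp h).1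
            exact absurd this (by omega)
        rw [hF_delta _ hx1, hF_delta _ hx2]
        exact hT.2.2 i (j - k + lam 0) (hdsum_of_delta _ hx1) (hdsum_of_delta _ hx2)
      · -- lower cell in λ
        rcases hshape_union _ h1 with hx1 | hx1
        · exact hjunction i j hx1 hx2
        · have hiL : stairLen n α ≤ i := ((mem_lamPart hanti).mp hx1).1
          rw [hF_lam _ hx1, hF_lam _ hx2]
          exact hT.2.2 i j (hdsum_of_lam _ hx1) (hdsum_of_lam _ hx2)
  · -- lattice property
    set Psi : ℕ × ℕ → ℕ × ℕ :=
      fun y => if y.1 < stairLen n α then (y.1, y.2 - k + lam 0) else y with hPsi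
    set Phi : ℕ × ℕ → ℕ × ℕ :=
      fun y => if y.1 < stairLen n α then (y.1, y.2 - lam 0 + k) else y with hPhi
    have hPsiL : ∀ y : ℕ × ℕ, y.1 < stairLen n α → Psi y = (y.1, y.2 - k + lam 0) := by
      intro y h; rw [hPsi]; exact if_pos h
    have hPsiG : ∀ y : ℕ × ℕ, ¬ y.1 < stairLen n α → Psi y = y := by
      intro y h; rw [hPsi]; exact if_neg h
    have hPhiL : ∀ y : ℕ × ℕ, y.1 < stairLen n α → Phi y = (y.1, y.2 - lam 0 + k) := by
      intro y h; rw [hPhi]; exact if_pos h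
    have hPhiG : ∀ y : ℕ × ℕ, ¬ y.1 < stairLen n α → Phi y = y := by
      intro y h; rw [hPhi]; exact if_neg h
    have hPsi_fst : ∀ y : ℕ × ℕ, (Psi y).1 = y.1 := by
      intro y
      by_cases h : y.1 < stairLen n α
      · rw [hPsiL y h]
      · rw [hPsiG y h]
    have hPsi_mem : ∀ y ∈ shapeS n α m lam k, Psi y ∈ dsumS n α m lam := by
      intro y hy
      rw [mem_shapeS hanti] at hy
      by_cases h : y.1 < stairLen n α
      · rw [hPsiL y h]
        rcases hy with hy | hy
        · obtain ⟨h1, h2, h3, h4⟩ := hy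
          rw [mem_dsumS hanti]; left
          refine ⟨h1, show lam 0 ≤ y.2 - k + lam 0 by omega,
            show y.2 - k + lam 0 - lam 0 < n by omega, ?_⟩
          show stairLen n α ≤ y.1 + colH n α (y.2 - k + lam 0 - lam 0)
          rw [show y.2 - k + lam 0 - lam 0 = y.2 - k by omega]
          exact h4
        · omega
      · rw [hPsiG y h]
        rw [mem_dsumS hanti]
        rcases hy with hy | hy
        · omega
        · exact Or.inr hy
    have hPhi_mem : ∀ y ∈ dsumS n α m lam, Phi y ∈ shapeS n α m lam k := by
      intro y hy
      rw [mem_dsumS hanti] at hy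
      by_cases h : y.1 < stairLen n α
      · rw [hPhiL y h]
        rcases hy with hy | hy
        · obtain ⟨h1, h2, h3, h4⟩ := hy
          rw [mem_shapeS hanti]; left
          refine ⟨h1, show k ≤ y.2 - lam 0 + k by omega,
            show y.2 - lam 0 + k - k < n by omega, ?_⟩
          show stairLen n α ≤ y.1 + colH n α (y.2 - lam 0 + k - k)
          rw [show y.2 - lam 0 + k - k = y.2 - lam 0 by omega]
          exact h4
        · omega
      · rw [hPhiG y h]
        rw [mem_shapeS hanti]
        rcases hy with hy | hy
        · omega
        · exact Or.inr hy
    have hPhiPsi : ∀ y ∈ shapeS n α m lam k, Phi (Psi y) = y := by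
      intro y hy
      rw [mem_shapeS hanti] at hy
      by_cases h : y.1 < stairLen n α
      · have hky : k ≤ y.2 := by rcases hy with hy | hy <;> omega
        rw [hPsiL y h, hPhiL _ (show (y.1, y.2 - k + lam 0).1 < stairLen n α from h)]
        exact Prod.ext_iff.mpr ⟨rfl, show y.2 - k + lam 0 - lam 0 + k = y.2 by omega⟩
      · rw [hPsiG y h, hPhiG y h]
    have hPsiPhi : ∀ y ∈ dsumS n α m lam, Psi (Phi y) = y := by
      intro y hy
      rw [mem_dsumS hanti] at hy
      by_cases h : y.1 < stairLen n α
      · have hky : lam 0 ≤ y.2 := by rcases hy with hy | hy <;> omega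
        rw [hPhiL y h, hPsiL _ (show (y.1, y.2 - lam 0 + k).1 < stairLen n α from h)]
        exact Prod.ext_iff.mpr ⟨rfl, show y.2 - lam 0 + k - k + lam 0 = y.2 by omega⟩
      · rw [hPhiG y h, hPsiG y h]
    have hFT : ∀ y ∈ shapeS n α m lam k, F y = T (Psi y) := by
      intro y hy
      by_cases h : y.1 < stairLen n α
      · have hyd : y ∈ shiftD (deltaUp n α) 0 k := by
          rcases hshape_union _ hy with h' | h'
          · exact h'
          · have := ((mem_lamPart hanti).mp h').1
            omega
        rw [hF_delta _ hyd, hPsiL y h]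
      · have hyl : y ∈ shiftD (partCells m lam) (stairLen n α) 0 := by
          rcases hshape_union _ hy with h' | h'
          · have := (mem_deltaPart.mp h').1
            omega
          · exact h'
        rw [hF_lam _ hyl, hPsiG y h]
    have hRB : ∀ a b : ℕ × ℕ, a ∈ shapeS n α m lam k → b ∈ shapeS n α m lam k →
        (ReadBefore a b ↔ ReadBefore (Psi a) (Psi b)) := by
      intro a b ha hb
      have hka : a.1 < stairLen n α → k ≤ a.2 := by
        intro h
        rw [mem_shapeS hanti] at ha
        rcases ha with ha | ha <;> omega
      have hkb : b.1 < stairLen n α → k ≤ b.2 := by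
        intro h
        rw [mem_shapeS hanti] at hb
        rcases hb with hb | hb <;> omega
      by_cases h1 : a.1 < stairLen n α <;> by_cases h2 : b.1 < stairLen n α
      · rw [hPsiL a h1, hPsiL b h2]
        unfold ReadBefore
        dsimp only
        constructor <;> intro h <;>
          [ (have := hka h1; have := hkb h2; omega);
            (have := hka h1; have := hkb h2; omega) ]
      · rw [hPsiL a h1, hPsiG b h2]
        unfold ReadBefore
        dsimp only
        constructor <;> intro h <;> omega
      · rw [hPsiG a h1, hPsiL b h2]
        unfold ReadBefore
        dsimp only
        constructor <;> intro h <;> (have := hkb h2; omega)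
      · rw [hPsiG a h1, hPsiG b h2]
    intro x hx v
    have key : ∀ w : ℕ,
        ((shapeS n α m lam k).filter (fun y => ReadBefore x y ∧ F y = w)).card =
        ((dsumS n α m lam).filter (fun y => ReadBefore (Psi x) y ∧ T y = w)).card := by
      intro w
      apply Finset.card_bij' (i := fun y _ => Psi y) (j := fun z _ => Phi z)
      case hi =>
        intro y hy
        rw [Finset.mem_filter] at hy ⊢
        obtain ⟨hy1, hy2, hy3⟩ := hy
        exact ⟨hPsi_mem y hy1, (hRB x y hx hy1).mp hy2, by rw [← hFT y hy1]; exact hy3⟩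
      case hj =>
        intro z hz
        rw [Finset.mem_filter] at hz ⊢
        obtain ⟨hz1, hz2, hz3⟩ := hz
        have hzm := hPhi_mem z hz1
        refine ⟨hzm, ?_, ?_⟩
        · apply (hRB x (Phi z) hx hzm).mpr
          rw [hPsiPhi z hz1]
          exact hz2
        · rw [hFT (Phi z) hzm, hPsiPhi z hz1]
          exact hz3
      case left_inv =>
        intro y hy
        rw [Finset.mem_filter] at hy
        exact hPhiPsi y hy.1
      case right_inv =>
        intro z hz
        rw [Finset.mem_filter] at hz
        exact hPsiPhi z hz.1
    rw [key (v + 2), key (v + 1)]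
    exact hlat (Psi x) (hPsi_mem x hx) v


end SchurStair
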